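/- Let f : ℝ^{D−d} × ℝ^d × ℝ → ℝ^{D−d} and g : ℝ^{D−d} × ℝ^d × ℝ → ℝ^d, and let S : ℝ^{D−d} × ℝ^d → ℝ be a bilinear map such that S(f(q,p,t), p) + S(q, g(q,p,t)) = 0 for all q ∈ ℝ^{D−d}, p ∈ ℝ^d, t ∈ ℝ. Assume the PRK coefficients satisfy b_i = B_i for all i, b_i A_{ij} + B_j a_{ji} − b_i B_j = 0 for all i, j, and c_i = C_i for all i. Let t_0 < t_1 < … < t_N with h_n = t_{n+1} − t_n, and suppose q_0,…,q_N ∈ ℝ^{D−d}, p_0,…,p_N ∈ ℝ^d, stages Q_{n,i}, P_{n,i} and slopes k_{n,i} = f(Q_{n,i}, P_{n,i}, t_n + c_i h_n), ℓ_{n,i} = g(Q_{n,i}, P_{n,i}, t_n + C_i h_n) satisfy q_{n+1} = q_n + h_n Σ_{i=1}^s b_i k_{n,i}, p_{n+1} = p_n + h_n Σ_{i=1}^s B_i ℓ_{n,i}, Q_{n,i} = q_n + h_n Σ_{j=1}^s a_{ij} k_{n,j}, P_{n,i} = p_n + h_n Σ_{j=1}^s A_{ij} ℓ_{n,j}. Then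 S(q_n, p_n) = S(q_0, p_0) for every n = 0,…,N. -/

import Mathlib

open Matrix BigOperators


private lemma prk_aux {s : ℕ} (h : ℝ) (B : Fin s → ℝ) (A a : Fin s → Fin s → ℝ)
    (u v : Fin s → ℝ) (e : Fin s → Fin s → ℝ)
    (hkey : ∀ i, u i + v i = 0)
    (hsym : ∀ i j, B i * A i j + B j * a j i - B i * B j = 0) :
    h * ∑ x, B x * (u x - h * ∑ j, A x j * e x j)
      + h * ∑ x, B x * (v x - h * ∑ i, a x i * e i x + h * ∑ y, B y * e y x) = 0 := by
  have f1 : ∑ x, B x * (u x - h * ∑ j, A x j * e x j)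
      = ∑ x, B x * u x - h * ∑ x, ∑ j, B x * (A x j * e x j) := by
    have e1 : ∀ x : Fin s, B x * (u x - h * ∑ j, A x j * e x j)
        = B x * u x - h * ∑ j, B x * (A x j * e x j) := by
      intro x
      conv_rhs => rw [← Finset.mul_sum]
      ring
    rw [Finset.sum_congr rfl (fun x _ => e1 x), Finset.sum_sub_distrib, ← Finset.mul_sum]
  have f2 : ∑ x, B x * (v x - h * ∑ i, a x i * e i x + h * ∑ y, B y * e y x)
      = ∑ x, B x * v x - h * ∑ x, ∑ i, B x * (a x i * e i x)
        + h * ∑ x, ∑ y, B x * (B y * e y x) := by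
    have e2 : ∀ x : Fin s, B x * (v x - h * ∑ i, a x i * e i x + h * ∑ y, B y * e y x)
        = B x * v x - h * ∑ i, B x * (a x i * e i x) + h * ∑ y, B x * (B y * e y x) := by
      intro x
      conv_rhs => rw [← Finset.mul_sum, ← Finset.mul_sum]
      ring
    rw [Finset.sum_congr rfl (fun x _ => e2 x), Finset.sum_add_distrib,
      Finset.sum_sub_distrib, ← Finset.mul_sum, ← Finset.mul_sum]
  rw [f1, f2]
  have hu : (∑ x, B x * u x) + (∑ x, B x * v x) = 0 := by
    rw [← Finset.sum_add_distrib]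
    apply Finset.sum_eq_zero
    intro x _
    have := hkey x
    linear_combination B x * this
  have hD : (∑ x, ∑ j, B x * (A x j * e x j)) + (∑ x, ∑ i, B x * (a x i * e i x))
      - (∑ x, ∑ y, B x * (B y * e y x)) = 0 := by
    rw [Finset.sum_comm (f := fun x i => B x * (a x i * e i x)),
      Finset.sum_comm (f := fun x y => B x * (B y * e y x)),
      ← Finset.sum_add_distrib, ← Finset.sum_sub_distrib]
    apply Finset.sum_eq_zero
    intro i _
    rw [← Finset.sum_add_distrib, ← Finset.sum_sub_distrib]
    apply Finset.sum_eq_zero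
    intro j _
    linear_combination e i j * hsym i j
  linear_combination h * hu - h * h * hD

/-- Theorem 2.4: a symplectic PRK scheme exactly conserves every bilinear invariant
`S(q, p)` of the partitioned system `dq/dt = f(q,p,t)`, `dp/dt = g(q,p,t)`. -/
theorem stmt_2 (D d s N : ℕ)
    (f : (Fin (D - d) → ℝ) → (Fin d → ℝ) → ℝ → (Fin (D - d) → ℝ))
    (g : (Fin (D - d) → ℝ) → (Fin d → ℝ) → ℝ → (Fin d → ℝ))
    (S : (Fin (D - d) → ℝ) →ₗ[ℝ] (Fin d → ℝ) →ₗ[ℝ] ℝ)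
    (hS : ∀ q p t, S (f q p t) p + S q (g q p t) = 0)
    (a A : Fin s → Fin s → ℝ) (b B c C : Fin s → ℝ)
    (hbB : ∀ i, b i = B i)
    (hsymp : ∀ i j, b i * A i j + B j * a j i - b i * B j = 0)
    (hcC : ∀ i, c i = C i)
    (t : Fin (N + 1) → ℝ) (ht : StrictMono t)
    (q : Fin (N + 1) → Fin (D - d) → ℝ) (p : Fin (N + 1) → Fin d → ℝ)
    (Q k : Fin N → Fin s → Fin (D - d) → ℝ) (P l : Fin N → Fin s → Fin d → ℝ)
    (hk : ∀ (n : Fin N) (i : Fin s),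
      k n i = f (Q n i) (P n i) (t n.castSucc + c i * (t n.succ - t n.castSucc)))
    (hl : ∀ (n : Fin N) (i : Fin s),
      l n i = g (Q n i) (P n i) (t n.castSucc + C i * (t n.succ - t n.castSucc)))
    (hqstep : ∀ n : Fin N,
      q n.succ = q n.castSucc + (t n.succ - t n.castSucc) • ∑ i, b i • k n i)
    (hpstep : ∀ n : Fin N,
      p n.succ = p n.castSucc + (t n.succ - t n.castSucc) • ∑ i, B i • l n i)
    (hQ : ∀ (n : Fin N) (i : Fin s),
      Q n i = q n.castSucc + (t n.succ - t n.castSucc) • ∑ j, a i j • k n j)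
    (hP : ∀ (n : Fin N) (i : Fin s),
      P n i = p n.castSucc + (t n.succ - t n.castSucc) • ∑ j, A i j • l n j) :
    ∀ n, S (q n) (p n) = S (q 0) (p 0) := by

  have step : ∀ n : Fin N, S (q n.succ) (p n.succ) = S (q n.castSucc) (p n.castSucc) := by
    intro n
    set h := t n.succ - t n.castSucc with hh
    have key : ∀ i, S (k n i) (P n i) + S (Q n i) (l n i) = 0 := by
      intro i
      rw [hk, hl, hcC]
      exact hS _ _ _
    have h1 : ∀ i, S (k n i) (p n.castSucc)
        = S (k n i) (P n i) - h * ∑ j, A i j * S (k n i) (l n j) := by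
      intro i
      rw [hP n i, ← hh]
      simp [Finset.mul_sum, mul_comm]
    have h2 : ∀ j, S (q n.castSucc) (l n j)
        = S (Q n j) (l n j) - h * ∑ i, a j i * S (k n i) (l n j) := by
      intro j
      rw [hQ n j, ← hh]
      simp [Finset.mul_sum, map_sum, LinearMap.coe_sum, Finset.sum_apply, mul_comm]
    rw [hqstep n, hpstep n]
    simp only [map_add, _root_.map_smul, map_sum, LinearMap.add_apply, LinearMap.smul_apply,
      LinearMap.coe_sum, Finset.sum_apply, smul_eq_mul]
    rw [← hh]
    simp only [h1, h2, hbB]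
    rw [add_assoc, add_eq_left]
    have hsymB : ∀ i j, B i * A i j + B j * a j i - B i * B j = 0 := by
      intro i j
      rw [← hbB i]
      have := hsymp i j
      linarith [hbB j]
    exact prk_aux h B A a (fun i => (S (k n i)) (P n i)) (fun i => (S (Q n i)) (l n i))
      (fun i j => (S (k n i)) (l n j)) key hsymB
  intro n
  induction n using Fin.induction with
  | zero => rfl
  | succ m ih => rw [step m]; exact ih
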